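/- The Fuchs–van de Graaf upper bound: for density matrices ρ, σ, the trace distance satisfies ‖ρ − σ‖₁ ≤ 2√(1 − F(ρ,σ)²), where F is the fidelity. -/

import Mathlib

open Matrix
open scoped ComplexOrder

namespace Matrix.PosSemidef

/-- The positive semidefinite square root of a positive semidefinite matrix
(the definition removed from Mathlib, restored with its old meaning). -/
noncomputable def sqrt {n 𝕜 : Type*} [Fintype n] [DecidableEq n] [RCLike 𝕜]
    {A : Matrix n n 𝕜} (hA : A.PosSemidef) : Matrix n n 𝕜 :=
  hA.1.eigenvectorUnitary.1 * diagonal ((↑) ∘ (√·) ∘ hA.1.eigenvalues) *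
    (star hA.1.eigenvectorUnitary : Matrix n n 𝕜)

end Matrix.PosSemidef

/-- Trace norm: `tr √(Aᴴ A)`. -/
noncomputable def traceNorm {n : Type*} [Fintype n] [DecidableEq n] (A : Matrix n n ℂ) : ℝ :=
  ((Matrix.posSemidef_conjTranspose_mul_self A).sqrt.trace).re

/-- Hilbert–Schmidt (Frobenius) norm: `√(tr (Aᴴ A))`. -/
noncomputable def hsNorm {n : Type*} [Fintype n] (A : Matrix n n ℂ) : ℝ :=
  Real.sqrt ((Aᴴ * A).trace.re)

/-- Fidelity `F(ρ,σ) = tr √(√ρ σ √ρ)` (using `(√ρ)ᴴ = √ρ`). -/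
noncomputable def fidelity {n : Type*} [Fintype n] [DecidableEq n] {ρ σ : Matrix n n ℂ}
    (hρ : ρ.PosSemidef) (hσ : σ.PosSemidef) : ℝ :=
  (((hσ.mul_mul_conjTranspose_same hρ.sqrt).sqrt).trace).re

set_option linter.unusedSectionVars false
set_option maxHeartbeats 1000000

section SqrtAux

open scoped MatrixOrder

namespace Matrix.PosSemidef

variable {n : Type*} [Fintype n] [DecidableEq n]

lemma sqrt_eq_cfc' {A : Matrix n n ℂ} (hA : A.PosSemidef) : hA.sqrt = CFC.sqrt A := by
  rw [CFC.sqrt_eq_real_sqrt A hA.nonneg, cfcₙ_eq_cfc (hf0 := Real.sqrt_zero), hA.1.cfc_eq]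
  rfl

lemma posSemidef_sqrt {A : Matrix n n ℂ} (hA : A.PosSemidef) : hA.sqrt.PosSemidef := by
  rw [sqrt_eq_cfc']
  exact (CFC.sqrt_nonneg A).posSemidef

lemma sqrt_mul_self {A : Matrix n n ℂ} (hA : A.PosSemidef) : hA.sqrt * hA.sqrt = A := by
  rw [sqrt_eq_cfc']
  exact CFC.sqrt_mul_sqrt_self A hA.nonneg

lemma eq_sqrt_of_sq_eq {A : Matrix n n ℂ} (hA : A.PosSemidef) {B : Matrix n n ℂ}
    (hB : B.PosSemidef) (hAB : A ^ 2 = B) : A = hB.sqrt := by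
  rw [sqrt_eq_cfc', ← hAB, CFC.sqrt_sq A hA.nonneg]

end Matrix.PosSemidef

end SqrtAux

section Aux

variable {n : Type*} [Fintype n] [DecidableEq n]

lemma hs_trace_re (B : Matrix n n ℂ) :
    (Bᴴ * B).trace.re = ∑ p : n × n, ‖B p.1 p.2‖ ^ 2 := by
  simp only [trace, diag, mul_apply, conjTranspose_apply, Fintype.sum_prod_type]
  rw [Complex.re_sum]
  rw [Finset.sum_comm]
  congr 1; ext i; rw [Complex.re_sum]; congr 1; ext j
  rw [show (star (B j i) * B j i).re = Complex.normSq (B j i) by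
    simp [Complex.normSq_apply, Complex.mul_re]]
  rw [Complex.normSq_eq_norm_sq]

lemma hsNorm_nonneg (B : Matrix n n ℂ) : 0 ≤ hsNorm B := Real.sqrt_nonneg _

lemma trace_cs (B C : Matrix n n ℂ) :
    ‖(Bᴴ * C).trace‖ ≤ hsNorm B * hsNorm C := by
  set x : EuclideanSpace ℂ (n × n) := (WithLp.equiv 2 _).symm (fun p => B p.1 p.2)
  set y : EuclideanSpace ℂ (n × n) := (WithLp.equiv 2 _).symm (fun p => C p.1 p.2)
  have h1 : (Bᴴ * C).trace = inner (𝕜 := ℂ) x y := by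
    simp only [trace, diag, mul_apply, conjTranspose_apply, PiLp.inner_apply,
      RCLike.inner_apply, Fintype.sum_prod_type, x, y]
    rw [Finset.sum_comm]
    exact Finset.sum_congr rfl fun _ _ => Finset.sum_congr rfl fun _ _ => mul_comm _ _
  have h2 : ‖x‖ = hsNorm B := by
    rw [EuclideanSpace.norm_eq, hsNorm, hs_trace_re]
    rfl
  have h3 : ‖y‖ = hsNorm C := by
    rw [EuclideanSpace.norm_eq, hsNorm, hs_trace_re]
    rfl
  calc ‖(Bᴴ * C).trace‖ = ‖inner (𝕜 := ℂ) x y‖ := by rw [h1]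
    _ ≤ ‖x‖ * ‖y‖ := norm_inner_le_norm x y
    _ = hsNorm B * hsNorm C := by rw [h2, h3]

set_option linter.unusedSectionVars false

lemma sqrt_congr {A B : Matrix n n ℂ} (hA : A.PosSemidef) (hB : B.PosSemidef) (h : A = B) :
    hA.sqrt = hB.sqrt := by subst h; rfl

lemma psd_trace_real {A : Matrix n n ℂ} (hA : A.PosSemidef) :
    A.trace = (A.trace.re : ℂ) := by
  have h := hA.1
  have : A.trace = star A.trace := by
    conv_lhs => rw [← h]
    rw [trace_conjTranspose]
  exact (Complex.conj_eq_iff_re.mp this.symm).symm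

lemma psd_diag_nonneg {A : Matrix n n ℂ} (hA : A.PosSemidef) (i : n) :
    0 ≤ (A i i).re := by
  have := hA.re_dotProduct_nonneg (Pi.single i 1)
  simpa [dotProduct, mulVec, Pi.single_apply, Finset.sum_ite_eq] using this

lemma psd_trace_re_nonneg {A : Matrix n n ℂ} (hA : A.PosSemidef) :
    0 ≤ A.trace.re := by
  rw [trace, Complex.re_sum]
  exact Finset.sum_nonneg fun i _ => psd_diag_nonneg hA i

lemma hsNorm_mul_isometry {V M : Matrix n n ℂ} (hV : Vᴴ * V = 1) :
    hsNorm (V * M) = hsNorm M := by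
  unfold hsNorm
  rw [conjTranspose_mul, mul_assoc, ← mul_assoc Vᴴ, hV, one_mul]

lemma hsNorm_sq (M : Matrix n n ℂ) : hsNorm M ^ 2 = (Mᴴ * M).trace.re := by
  rw [hsNorm, Real.sq_sqrt]
  rw [hs_trace_re]
  exact Finset.sum_nonneg fun p _ => sq_nonneg _

lemma traceNorm_hermitian {H : Matrix n n ℂ} (hH : H.IsHermitian) :
    ∃ V : Matrix n n ℂ, Vᴴ * V = 1 ∧ ((H * V).trace) = (traceNorm H : ℂ) := by
  set W : Matrix n n ℂ := (hH.eigenvectorUnitary : Matrix n n ℂ)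
  set lam := hH.eigenvalues with hlam
  have hWs : Wᴴ * W = 1 := by
    rw [← star_eq_conjTranspose]
    exact Unitary.coe_star_mul_self hH.eigenvectorUnitary
  have key : ∀ d e : n → ℂ,
      (W * diagonal d * Wᴴ) * (W * diagonal e * Wᴴ) = W * diagonal (fun i => d i * e i) * Wᴴ := by
    intro d e
    rw [show (W * diagonal d * Wᴴ) * (W * diagonal e * Wᴴ)
        = W * (diagonal d * (Wᴴ * W) * diagonal e) * Wᴴ by noncomm_ring]
    rw [hWs, mul_one, diagonal_mul_diagonal]
  have traceWD : ∀ d : n → ℂ, (W * diagonal d * Wᴴ).trace = ∑ i, d i := by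
    intro d
    rw [trace_mul_comm, ← mul_assoc, hWs, one_mul, trace_diagonal]
  set s : n → ℂ := fun i => if 0 ≤ lam i then 1 else -1 with hs
  set V : Matrix n n ℂ := W * diagonal s * Wᴴ with hV
  have hspec : H = W * diagonal (fun i => (lam i : ℂ)) * Wᴴ := by
    have := hH.spectral_theorem
    rw [Unitary.conjStarAlgAut_apply, star_eq_conjTranspose] at this
    exact this
  set C : Matrix n n ℂ := W * diagonal (fun i => Complex.ofReal |lam i|) * Wᴴ with hC
  have hCpsd : C.PosSemidef := by
    apply Matrix.PosSemidef.mul_mul_conjTranspose_same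
    refine posSemidef_diagonal_iff.mpr fun i => ?_
    rw [Complex.zero_le_real]
    exact abs_nonneg _
  have hC2 : C ^ 2 = Hᴴ * H := by
    rw [hH.eq, ← pow_two, pow_two, pow_two, hspec, key, key]
    have : (fun i => Complex.ofReal |lam i| * Complex.ofReal |lam i|)
        = fun i => (lam i : ℂ) * (lam i : ℂ) := funext fun i => by
      rw [← Complex.ofReal_mul, ← Complex.ofReal_mul, abs_mul_abs_self]
    rw [this]
  have hCsqrt : C = (Matrix.posSemidef_conjTranspose_mul_self H).sqrt :=
    hCpsd.eq_sqrt_of_sq_eq _ hC2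
  have htn : (traceNorm H : ℂ) = ∑ i, Complex.ofReal |lam i| := by
    rw [traceNorm, ← hCsqrt, hC, traceWD, Complex.re_sum]
    push_cast
    rfl
  refine ⟨V, ?_, ?_⟩
  · have hVH : Vᴴ = W * diagonal (fun i => star (s i)) * Wᴴ := by
      rw [hV, conjTranspose_mul, conjTranspose_mul, conjTranspose_conjTranspose,
        diagonal_conjTranspose, mul_assoc]
      rfl
    rw [hVH, hV, key]
    have : (fun i => star (s i) * s i) = fun _ : n => (1 : ℂ) := by
      ext i
      by_cases h : 0 ≤ lam i <;> simp [hs, h]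
    rw [this, diagonal_one, mul_one]
    exact mul_eq_one_comm.mp hWs
  · rw [htn, hV]
    conv_lhs => rw [hspec]
    rw [key, traceWD]
    congr 1
    ext i
    by_cases h : 0 ≤ lam i
    · simp [hs, h, abs_of_nonneg h]
    · push_neg at h
      simp [hs, not_le.mpr h, abs_of_neg h]

lemma exists_polar_unitary (A : Matrix n n ℂ) :
    ∃ U : Matrix n n ℂ, Uᴴ * U = 1 ∧ (Aᴴ * U).trace = (traceNorm A : ℂ) := by
  have hH : (Aᴴ * A).PosSemidef := posSemidef_conjTranspose_mul_self A
  set h := hH.1 with hh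
  set d : n → ℝ := h.eigenvalues with hd
  have hd0 : ∀ i, 0 ≤ d i := fun i => hH.eigenvalues_nonneg i
  set b := h.eigenvectorBasis with hb
  -- inner products of the images of the eigenvectors
  have hAb : ∀ i j, star (A *ᵥ ⇑(b i)) ⬝ᵥ (A *ᵥ ⇑(b j)) = if i = j then (d j : ℂ) else 0 := by
    intro i j
    rw [star_mulVec, dotProduct_mulVec, vecMul_vecMul, ← dotProduct_mulVec,
      h.mulVec_eigenvectorBasis]
    have : star ⇑(b i) ⬝ᵥ ⇑(b j) = if i = j then (1 : ℂ) else 0 := by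
      have := orthonormal_iff_ite.mp b.orthonormal i j
      simpa [PiLp.inner_apply, RCLike.inner_apply, dotProduct, mul_comm] using this
    rw [dotProduct_smul, this]
    by_cases hij : i = j <;> simp [hij, Complex.real_smul, hd]
  have hAzero : ∀ i, d i = 0 → A *ᵥ ⇑(b i) = 0 := by
    intro i hi
    have := hAb i i
    rw [if_pos rfl, hi] at this
    exact dotProduct_star_self_eq_zero.mp (by simpa using this)
  classical
  -- the orthonormal family of normalized images
  set w : n → EuclideanSpace ℂ n := fun i =>
    if d i = 0 then 0 else ((Real.sqrt (d i) : ℂ)⁻¹) • ((WithLp.equiv 2 (n → ℂ)).symm (A *ᵥ ⇑(b i)))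
    with hw
  have hinner : ∀ i j, d i ≠ 0 → d j ≠ 0 →
      (inner ℂ (w i) (w j) : ℂ) = if i = j then 1 else 0 := by
    intro i j hi hj
    rw [hw]
    simp only [if_neg hi, if_neg hj]
    rw [inner_smul_left, inner_smul_right]
    have : (inner ℂ ((WithLp.equiv 2 (n → ℂ)).symm (A *ᵥ ⇑(b i)))
        ((WithLp.equiv 2 (n → ℂ)).symm (A *ᵥ ⇑(b j))) : ℂ) = if i = j then (d j : ℂ) else 0 := by
      change (A *ᵥ ⇑(b j)) ⬝ᵥ star (A *ᵥ ⇑(b i)) = _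
      rw [dotProduct_comm]
      exact hAb i j
    rw [this]
    by_cases hij : i = j
    · subst hij
      rw [if_pos rfl, if_pos rfl]
      rw [map_inv₀, Complex.conj_ofReal]
      norm_cast
      rw [← mul_assoc, ← mul_inv, Real.mul_self_sqrt (hd0 i), inv_mul_cancel₀ hi]
    · rw [if_neg hij, if_neg hij, mul_zero, mul_zero]
  have horth : Orthonormal ℂ (Set.restrict {i | d i ≠ 0} w) := by
    constructor
    · rintro ⟨i, hi⟩
      have h1 : (inner ℂ (w i) (w i) : ℂ) = 1 := by rw [hinner i i hi hi, if_pos rfl]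
      have h2 : (‖w i‖ : ℝ) ^ 2 = 1 := by
        have := @inner_self_eq_norm_sq ℂ _ _ _ _ (w i)
        rw [← this]
        have := congrArg Complex.re h1
        simpa using this
      show ‖w i‖ = 1
      rw [← Real.sqrt_sq (norm_nonneg (w i)), h2, Real.sqrt_one]
    · rintro ⟨i, hi⟩ ⟨j, hj⟩ hij
      have : i ≠ j := fun hc => hij (Subtype.ext hc)
      simpa [Set.restrict] using (hinner i j hi hj).trans (if_neg this)
  obtain ⟨c, hc⟩ := horth.exists_orthonormalBasis_extension_of_card_eq
    (finrank_euclideanSpace (𝕜 := ℂ) (ι := n))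
  set V : Matrix n n ℂ := (h.eigenvectorUnitary : Matrix n n ℂ) with hV
  have hVs : Vᴴ * V = 1 := by
    rw [← star_eq_conjTranspose]
    exact Unitary.coe_star_mul_self h.eigenvectorUnitary
  set U : Matrix n n ℂ := Matrix.of (fun k i => c i k) with hU
  have hUU : Uᴴ * U = 1 := by
    ext i j
    rw [mul_apply, one_apply]
    have := orthonormal_iff_ite.mp c.orthonormal i j
    simpa [PiLp.inner_apply, RCLike.inner_apply, conjTranspose_apply, hU, mul_comm] using this
  have hterm : ∀ i, (Vᴴ * (Aᴴ * U)) i i = star (A *ᵥ ⇑(b i)) ⬝ᵥ (fun m => c i m) := by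
    intro i
    have hrhs : star (A *ᵥ ⇑(b i)) ⬝ᵥ (fun m => c i m)
        = ∑ m, ∑ k, star (⇑(b i) k) * (star (A m k) * c i m) := by
      simp only [dotProduct, Pi.star_apply, mulVec, star_sum, star_mul', Finset.sum_mul]
      refine Finset.sum_congr rfl fun m _ => Finset.sum_congr rfl fun k _ => ?_
      ring
    rw [hrhs, Finset.sum_comm]
    simp only [mul_apply, conjTranspose_apply, hU, of_apply, Finset.mul_sum]
    refine Finset.sum_congr rfl fun k _ => Finset.sum_congr rfl fun m _ => ?_
    rfl
  have heval : ∀ i, star (A *ᵥ ⇑(b i)) ⬝ᵥ (fun m => c i m) = (Real.sqrt (d i) : ℂ) := by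
    intro i
    by_cases hi : d i = 0
    · rw [hAzero i hi, hi, Real.sqrt_zero]
      simp
    · have hci : c i = w i := hc i hi
      have hfun : (fun m => c i m) = fun m => ((Real.sqrt (d i) : ℂ))⁻¹ * (A *ᵥ ⇑(b i)) m := by
        funext m
        rw [hci, hw]
        simp [if_neg hi]
      rw [hfun]
      have : star (A *ᵥ ⇑(b i)) ⬝ᵥ (fun m => ((Real.sqrt (d i) : ℂ))⁻¹ * (A *ᵥ ⇑(b i)) m)
          = ((Real.sqrt (d i) : ℂ))⁻¹ * (star (A *ᵥ ⇑(b i)) ⬝ᵥ (A *ᵥ ⇑(b i))) := by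
        simp [dotProduct, Finset.mul_sum]
        refine Finset.sum_congr rfl fun m _ => ?_
        ring
      rw [this, hAb i i, if_pos rfl]
      rw [← Complex.ofReal_inv, ← Complex.ofReal_mul]
      congr 1
      rw [← Real.sqrt_mul_self (hd0 i)]
      have hsne : Real.sqrt (d i) ≠ 0 := fun hcon => hi (by
        have := congrArg (fun x => x * x) hcon
        simpa [Real.mul_self_sqrt (hd0 i)] using this)
      field_simp
      rw [Real.sq_sqrt (Real.sqrt_nonneg _)]
  have htrace : (Aᴴ * (U * Vᴴ)).trace = ∑ i, (Real.sqrt (d i) : ℂ) := by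
    rw [show Aᴴ * (U * Vᴴ) = Aᴴ * U * Vᴴ by rw [mul_assoc], trace_mul_comm, trace]
    rw [show Vᴴ * (Aᴴ * U) = Vᴴ * (Aᴴ * U) from rfl]
    refine Finset.sum_congr rfl fun i _ => ?_
    rw [Matrix.diag_apply, hterm i, heval i]
  have hsqrt : hH.sqrt = V * diagonal (fun i => (Real.sqrt (d i) : ℂ)) * Vᴴ := rfl
  have htn : (traceNorm A : ℂ) = ∑ i, (Real.sqrt (d i) : ℂ) := by
    rw [traceNorm]
    have : (Matrix.posSemidef_conjTranspose_mul_self A).sqrt.trace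
        = ∑ i, (Real.sqrt (d i) : ℂ) := by
      rw [show (Matrix.posSemidef_conjTranspose_mul_self A).sqrt = hH.sqrt from rfl, hsqrt,
        trace_mul_comm, ← mul_assoc, hVs, one_mul, trace_diagonal]
    rw [this, Complex.re_sum]
    push_cast
    rfl
  refine ⟨U * Vᴴ, ?_, ?_⟩
  · rw [conjTranspose_mul, conjTranspose_conjTranspose]
    calc V * Uᴴ * (U * Vᴴ) = V * (Uᴴ * U) * Vᴴ := by noncomm_ring
      _ = 1 := by rw [hUU, mul_one, mul_eq_one_comm.mp hVs]
  · rw [htrace, htn]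

end Aux

theorem fuchs_van_de_graaf_upper {n : Type*} [Fintype n] [DecidableEq n]
    {ρ σ : Matrix n n ℂ}
    (hρ : ρ.PosSemidef) (hρ1 : ρ.trace = 1)
    (hσ : σ.PosSemidef) (hσ1 : σ.trace = 1) :
    traceNorm (ρ - σ) ≤ 2 * Real.sqrt (1 - (fidelity hρ hσ) ^ 2) := by
  set X := hρ.sqrt with hXdef
  set A := hσ.sqrt * hρ.sqrt with hAdef
  set F := fidelity hρ hσ with hFdef
  have hXh : Xᴴ = X := hρ.posSemidef_sqrt.1
  have hsh : hσ.sqrtᴴ = hσ.sqrt := hσ.posSemidef_sqrt.1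
  have hfid : F = traceNorm A := by
    have heq : hρ.sqrt * σ * hρ.sqrtᴴ = Aᴴ * A := by
      rw [hAdef, conjTranspose_mul, hρ.posSemidef_sqrt.1, hσ.posSemidef_sqrt.1]
      calc hρ.sqrt * σ * hρ.sqrt = hρ.sqrt * σ * hρ.sqrt := rfl
        _ = hρ.sqrt * hσ.sqrt * (hσ.sqrt * hρ.sqrt) := by
            rw [show hρ.sqrt * hσ.sqrt * (hσ.sqrt * hρ.sqrt)
              = hρ.sqrt * (hσ.sqrt * hσ.sqrt) * hρ.sqrt by noncomm_ring, hσ.sqrt_mul_self]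
    have hs := sqrt_congr (hσ.mul_mul_conjTranspose_same hρ.sqrt)
      (posSemidef_conjTranspose_mul_self A) heq
    rw [hFdef, fidelity, traceNorm, hs]
  obtain ⟨U, hUU, hUtr⟩ := exists_polar_unitary A
  have hUU' : U * Uᴴ = 1 := mul_eq_one_comm.mp hUU
  set Y := hσ.sqrt * U with hYdef
  have hXX : Xᴴ * X = ρ := by rw [hXh]; exact hρ.sqrt_mul_self
  have hXXc : X * Xᴴ = ρ := by rw [hXh]; exact hρ.sqrt_mul_self
  have hYY : Yᴴ * Y = Uᴴ * σ * U := by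
    rw [hYdef, conjTranspose_mul, hsh]
    calc Uᴴ * hσ.sqrt * (hσ.sqrt * U) = Uᴴ * (hσ.sqrt * hσ.sqrt) * U := by noncomm_ring
      _ = Uᴴ * σ * U := by rw [hσ.sqrt_mul_self]
  have hYYc : Y * Yᴴ = σ := by
    rw [hYdef, conjTranspose_mul, hsh]
    calc hσ.sqrt * U * (Uᴴ * hσ.sqrt) = hσ.sqrt * (U * Uᴴ) * hσ.sqrt := by noncomm_ring
      _ = σ := by rw [hUU', mul_one, hσ.sqrt_mul_self]
  have htrY1 : (Yᴴ * Y).trace = 1 := by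
    rw [hYY, trace_mul_comm, ← mul_assoc, hUU', one_mul, hσ1]
  have htrXY : (Xᴴ * Y).trace = (F : ℂ) := by
    have hXYA : Xᴴ * Y = Aᴴ * U := by
      rw [hYdef, hXdef, hAdef, conjTranspose_mul, hρ.posSemidef_sqrt.1, hσ.posSemidef_sqrt.1,
        ← mul_assoc]
    rw [hXYA, hUtr, hfid]
  have htrYX : (Yᴴ * X).trace = (F : ℂ) := by
    have h1 : Yᴴ * X = (Xᴴ * Y)ᴴ := by
      rw [conjTranspose_mul Xᴴ Y, conjTranspose_conjTranspose]
    rw [h1, trace_conjTranspose, htrXY, RCLike.star_def, Complex.conj_ofReal]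
  have htrM : ((X - Y)ᴴ * (X - Y)).trace = ((2 - 2*F : ℝ) : ℂ) := by
    rw [conjTranspose_sub, sub_mul, mul_sub, mul_sub, trace_sub, trace_sub, trace_sub,
      hXX, hρ1, htrXY, htrYX, htrY1]
    push_cast
    ring
  have htrP : ((X + Y)ᴴ * (X + Y)).trace = ((2 + 2*F : ℝ) : ℂ) := by
    rw [conjTranspose_add, add_mul, mul_add, mul_add, trace_add, trace_add, trace_add,
      hXX, hρ1, htrXY, htrYX, htrY1]
    push_cast
    ring
  have hFle : 0 ≤ 2 - 2*F := by
    have hnn := psd_trace_re_nonneg (posSemidef_conjTranspose_mul_self (X - Y))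
    rw [htrM, Complex.ofReal_re] at hnn
    exact hnn
  have hF0 : 0 ≤ 2 + 2*F := by
    have hnn := psd_trace_re_nonneg (posSemidef_conjTranspose_mul_self (X + Y))
    rw [htrP, Complex.ofReal_re] at hnn
    exact hnn
  have hhsM : hsNorm (X - Y) = Real.sqrt (2 - 2*F) := by
    rw [hsNorm, htrM, Complex.ofReal_re]
  have hhsP : hsNorm (X + Y) = Real.sqrt (2 + 2*F) := by
    rw [hsNorm, htrP, Complex.ofReal_re]
  obtain ⟨V, hVV, hVtr⟩ := traceNorm_hermitian (hρ.1.sub hσ.1)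
  have hmat : (X - Y) * (X + Y)ᴴ + (X + Y) * (X - Y)ᴴ = (ρ - σ) + (ρ - σ) := by
    rw [conjTranspose_sub, conjTranspose_add]
    have e1 : (X - Y) * (Xᴴ + Yᴴ) + (X + Y) * (Xᴴ - Yᴴ)
        = X * Xᴴ + X * Xᴴ - (Y * Yᴴ + Y * Yᴴ) := by noncomm_ring
    rw [e1, hXXc, hYYc]
    abel
  have h2 : ((ρ - σ) * V).trace + ((ρ - σ) * V).trace
      = ((X - Y) * ((X + Y)ᴴ * V)).trace + ((X + Y) * ((X - Y)ᴴ * V)).trace := by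
    rw [← trace_add, ← trace_add, ← add_mul, ← mul_assoc, ← mul_assoc, ← add_mul, hmat]
  have hc1 : ((X - Y) * ((X + Y)ᴴ * V)).trace = ((X + Y)ᴴ * (V * (X - Y))).trace := by
    rw [trace_mul_comm, mul_assoc]
  have hc2 : ((X + Y) * ((X - Y)ᴴ * V)).trace = ((X - Y)ᴴ * (V * (X + Y))).trace := by
    rw [trace_mul_comm, mul_assoc]
  have hb1 : ‖((X + Y)ᴴ * (V * (X - Y))).trace‖
      ≤ hsNorm (X + Y) * hsNorm (X - Y) := by
    have hcs := trace_cs (X + Y) (V * (X - Y))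
    rwa [hsNorm_mul_isometry hVV] at hcs
  have hb2 : ‖((X - Y)ᴴ * (V * (X + Y))).trace‖
      ≤ hsNorm (X - Y) * hsNorm (X + Y) := by
    have hcs := trace_cs (X - Y) (V * (X + Y))
    rwa [hsNorm_mul_isometry hVV] at hcs
  have hT : traceNorm (ρ - σ) = (((ρ - σ) * V).trace).re := by
    have := congrArg Complex.re hVtr
    rw [Complex.ofReal_re] at this
    exact this.symm
  have hineq : 2 * traceNorm (ρ - σ) ≤ 2 * (hsNorm (X + Y) * hsNorm (X - Y)) := by
    have e : 2 * traceNorm (ρ - σ) = (((ρ-σ)*V).trace + ((ρ-σ)*V).trace).re := by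
      rw [Complex.add_re, hT]; ring
    rw [e, h2, hc1, hc2, Complex.add_re]
    have r1 := (Complex.re_le_norm _).trans hb1
    have r2 := (Complex.re_le_norm _).trans hb2
    linarith [r1, r2]
  have hprod : hsNorm (X + Y) * hsNorm (X - Y) = 2 * Real.sqrt (1 - F^2) := by
    rw [hhsP, hhsM, ← Real.sqrt_mul hF0]
    rw [show (2+2*F)*(2-2*F) = 4*(1-F^2) by ring]
    rw [Real.sqrt_mul (by norm_num : (0:ℝ) ≤ 4)]
    rw [show (4:ℝ) = 2^2 by norm_num, Real.sqrt_sq (by norm_num : (0:ℝ) ≤ 2)]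
  rw [← hprod]
  linarith [hineq]
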